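/- Let l(x,y;θ) = ⟨y, f_θ(x)⟩ with y ranging over the probability simplex in ℝ^m, let F be a non-decreasing concave function with ‖f_θ(x') − f_θ(x)‖_r ≤ F(‖x'−x‖_r) for all x, x', and suppose ‖f_θ(x)‖_∞ ≤ M for all x. Then for any κ ∈ (0,∞) and any z=(x,y), z'=(x',y') with ‖x'−x‖_r + κ‖y'−y‖₁ ≤ t, we have l(x',y';θ) − l(x,y;θ) ≤ sup_{τ ∈ [0,t]} (F(t−τ) + M·κ⁻¹·τ), and the right-hand side is a non-decreasing concave function of t. -/

import Mathlib

open Set ENNReal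

private lemma coord_abs_le {m : ℕ} (r : ℝ≥0∞) [Fact (1 ≤ r)]
    (v : PiLp r (fun _ : Fin m => ℝ)) (j : Fin m) : |v j| ≤ ‖v‖ := by
  rcases eq_or_ne r ∞ with hr | hr
  · subst hr
    rw [PiLp.norm_eq_ciSup]
    have : |v j| = ‖v j‖ := (Real.norm_eq_abs _).symm
    rw [this]
    exact le_ciSup (f := fun i => ‖v i‖) (Set.Finite.bddAbove (Set.finite_range _)) j
  · have h1 : (1 : ℝ≥0∞) ≤ r := Fact.out
    have hp1 : 1 ≤ r.toReal := by
      rw [← ENNReal.toReal_one]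
      exact ENNReal.toReal_mono hr h1
    have hp : 0 < r.toReal := lt_of_lt_of_le one_pos hp1
    rw [PiLp.norm_eq_sum hp]
    have h2 : |v j| = (|v j| ^ r.toReal) ^ (1 / r.toReal) := by
      rw [← Real.rpow_mul (abs_nonneg _), mul_one_div_cancel (ne_of_gt hp),
        Real.rpow_one]
    rw [h2]
    apply Real.rpow_le_rpow (Real.rpow_nonneg (abs_nonneg _) _)
    · have : |v j| ^ r.toReal = ‖v j‖ ^ r.toReal := by rw [Real.norm_eq_abs]
      rw [this]
      exact Finset.single_le_sum (fun i _ => Real.rpow_nonneg (norm_nonneg _) _)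
        (Finset.mem_univ j)
    · positivity

private lemma bdd_above_aux (F : ℝ → ℝ) (hFmono : MonotoneOn F (Set.Ici 0)) (c : ℝ)
    {t : ℝ} (ht : 0 ≤ t) :
    BddAbove (Set.range fun τ : Set.Icc (0:ℝ) t => F (t - (τ:ℝ)) + c * (τ:ℝ)) := by
  refine ⟨F t + |c| * t, ?_⟩
  rintro _ ⟨⟨τ, hτ0, hτt⟩, rfl⟩
  have h1 : F (t - τ) ≤ F t := by
    apply hFmono (by simp; linarith) (by simpa) (by linarith)
  have h2 : c * τ ≤ |c| * t := by
    calc c * τ ≤ |c * τ| := le_abs_self _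
    _ = |c| * |τ| := abs_mul _ _
    _ ≤ |c| * t := by
        apply mul_le_mul_of_nonneg_left _ (abs_nonneg c)
        rw [abs_of_nonneg hτ0]; exact hτt
  simpa using add_le_add h1 h2

theorem stmt17 (n m : ℕ) (r : ℝ≥0∞) [Fact (1 ≤ r)]
    (f : PiLp r (fun _ : Fin n => ℝ) → PiLp r (fun _ : Fin m => ℝ))
    (F : ℝ → ℝ) (hFmono : MonotoneOn F (Set.Ici 0))
    (hFconc : ConcaveOn ℝ (Set.Ici 0) F)
    (hF : ∀ x x', ‖f x' - f x‖ ≤ F ‖x' - x‖)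
    (M : ℝ) (hM : ∀ x j, |f x j| ≤ M)
    (κ : ℝ) (hκ : 0 < κ) :
    (∀ (t : ℝ) (x x' : PiLp r (fun _ : Fin n => ℝ)) (y y' : Fin m → ℝ),
      (∀ j, 0 ≤ y j) → (∑ j, y j = 1) → (∀ j, 0 ≤ y' j) → (∑ j, y' j = 1) →
      ‖x' - x‖ + κ * (∑ j, |y' j - y j|) ≤ t →
      (∑ j, y' j * f x' j) - (∑ j, y j * f x j) ≤
        ⨆ τ : Set.Icc (0:ℝ) t, (F (t - (τ:ℝ)) + M * κ⁻¹ * (τ:ℝ))) ∧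
    MonotoneOn (fun t => ⨆ τ : Set.Icc (0:ℝ) t, (F (t - (τ:ℝ)) + M * κ⁻¹ * (τ:ℝ)))
      (Set.Ici 0) ∧
    ConcaveOn ℝ (Set.Ici 0)
      (fun t => ⨆ τ : Set.Icc (0:ℝ) t, (F (t - (τ:ℝ)) + M * κ⁻¹ * (τ:ℝ))) := by
  set c : ℝ := M * κ⁻¹ with hc
  refine ⟨?_, ?_, ?_⟩
  · -- Part 1
    intro t x x' y y' hy0 hy1 hy'0 hy'1 hle
    set s : ℝ := ∑ j, |y' j - y j| with hsdef
    have hs0 : 0 ≤ s := Finset.sum_nonneg fun j _ => abs_nonneg _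
    have hτ0 : 0 ≤ κ * s := mul_nonneg hκ.le hs0
    have ht0 : 0 ≤ t := le_trans (by positivity) hle
    have hτt : κ * s ≤ t := by have := norm_nonneg (x' - x); linarith
    have hxle : ‖x' - x‖ ≤ t - κ * s := by linarith
    haveI : Nonempty (Set.Icc (0:ℝ) t) :=
      Set.Nonempty.to_subtype (Set.nonempty_Icc.mpr ht0)
    have hsplit : (∑ j, y' j * f x' j) - (∑ j, y j * f x j) =
        (∑ j, y' j * (f x' j - f x j)) + (∑ j, (y' j - y j) * f x j) := by
      rw [← Finset.sum_add_distrib, ← Finset.sum_sub_distrib]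
      congr 1; ext j; ring
    have hd : ∀ j, |f x' j - f x j| ≤ ‖f x' - f x‖ := by
      intro j
      have := coord_abs_le r (f x' - f x) j
      simpa using this
    have h1 : (∑ j, y' j * (f x' j - f x j)) ≤ F (t - κ * s) := by
      calc (∑ j, y' j * (f x' j - f x j)) ≤ ∑ j, y' j * ‖f x' - f x‖ := by
            apply Finset.sum_le_sum
            intro j _
            exact mul_le_mul_of_nonneg_left ((le_abs_self _).trans (hd j)) (hy'0 j)
        _ = ‖f x' - f x‖ := by rw [← Finset.sum_mul, hy'1, one_mul]
        _ ≤ F ‖x' - x‖ := hF x x'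
        _ ≤ F (t - κ * s) := hFmono (by simp [norm_nonneg])
            (by simp; linarith [norm_nonneg (x' - x)]) hxle
    have h2 : (∑ j, (y' j - y j) * f x j) ≤ c * (κ * s) := by
      have : (∑ j, (y' j - y j) * f x j) ≤ ∑ j, |y' j - y j| * M := by
        apply Finset.sum_le_sum
        intro j _
        calc (y' j - y j) * f x j ≤ |(y' j - y j) * f x j| := le_abs_self _
          _ = |y' j - y j| * |f x j| := abs_mul _ _
          _ ≤ |y' j - y j| * M := mul_le_mul_of_nonneg_left (hM x j) (abs_nonneg _)
      rw [← Finset.sum_mul] at this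
      have heq : c * (κ * s) = s * M := by
        field_simp [hc]
        rw [hc, mul_assoc M, inv_mul_cancel₀ hκ.ne']
        ring
      rw [heq]
      exact this
    have hmem : κ * s ∈ Set.Icc (0:ℝ) t := ⟨hτ0, hτt⟩
    calc (∑ j, y' j * f x' j) - (∑ j, y j * f x j)
        ≤ F (t - κ * s) + c * (κ * s) := by rw [hsplit]; exact add_le_add h1 h2
      _ ≤ ⨆ τ : Set.Icc (0:ℝ) t, (F (t - (τ:ℝ)) + c * (τ:ℝ)) :=
          le_ciSup (bdd_above_aux F hFmono c ht0) (⟨κ * s, hmem⟩ : Set.Icc (0:ℝ) t)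
  · -- Part 2: monotone
    intro t₁ h1 t₂ h2 h12
    simp only [Set.mem_Ici] at h1 h2
    haveI : Nonempty (Set.Icc (0:ℝ) t₁) :=
      Set.Nonempty.to_subtype (Set.nonempty_Icc.mpr h1)
    apply ciSup_le
    rintro ⟨τ, hτ0, hτt⟩
    calc F (t₁ - τ) + c * τ ≤ F (t₂ - τ) + c * τ := by
          have := hFmono (a := t₁ - τ) (b := t₂ - τ) (by simp; linarith)
            (by simp; linarith) (by linarith)
          linarith
      _ ≤ ⨆ σ : Set.Icc (0:ℝ) t₂, (F (t₂ - (σ:ℝ)) + c * (σ:ℝ)) :=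
          le_ciSup (bdd_above_aux F hFmono c h2)
            (⟨τ, hτ0, hτt.trans h12⟩ : Set.Icc (0:ℝ) t₂)
  · -- Part 3: concave
    refine ⟨convex_Ici 0, ?_⟩
    intro t₁ h1 t₂ h2 a b ha hb hab
    simp only [Set.mem_Ici] at h1 h2
    simp only [smul_eq_mul]
    set T : ℝ := a * t₁ + b * t₂ with hT
    have hT0 : 0 ≤ T := by positivity
    haveI i1 : Nonempty (Set.Icc (0:ℝ) t₁) :=
      Set.Nonempty.to_subtype (Set.nonempty_Icc.mpr h1)
    haveI i2 : Nonempty (Set.Icc (0:ℝ) t₂) :=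
      Set.Nonempty.to_subtype (Set.nonempty_Icc.mpr h2)
    have key : ∀ τ₁ ∈ Set.Icc (0:ℝ) t₁, ∀ τ₂ ∈ Set.Icc (0:ℝ) t₂,
        a * (F (t₁ - τ₁) + c * τ₁) + b * (F (t₂ - τ₂) + c * τ₂) ≤
        ⨆ σ : Set.Icc (0:ℝ) T, (F (T - (σ:ℝ)) + c * (σ:ℝ)) := by
      rintro τ₁ ⟨hτ₁0, hτ₁t⟩ τ₂ ⟨hτ₂0, hτ₂t⟩
      set σ : ℝ := a * τ₁ + b * τ₂ with hσ
      have hσ0 : 0 ≤ σ := by positivity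
      have hσT : σ ≤ T := by
        apply add_le_add (mul_le_mul_of_nonneg_left hτ₁t ha)
          (mul_le_mul_of_nonneg_left hτ₂t hb)
      have hconc := hFconc.2 (x := t₁ - τ₁) (y := t₂ - τ₂)
        (by simp; linarith) (by simp; linarith) ha hb hab
      simp only [smul_eq_mul] at hconc
      have heq : a * (t₁ - τ₁) + b * (t₂ - τ₂) = T - σ := by ring
      rw [heq] at hconc
      calc a * (F (t₁ - τ₁) + c * τ₁) + b * (F (t₂ - τ₂) + c * τ₂)
          = (a * F (t₁ - τ₁) + b * F (t₂ - τ₂)) + c * σ := by ring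
        _ ≤ F (T - σ) + c * σ := by linarith
        _ ≤ ⨆ σ' : Set.Icc (0:ℝ) T, (F (T - (σ':ℝ)) + c * (σ':ℝ)) :=
            le_ciSup (bdd_above_aux F hFmono c hT0) (⟨σ, hσ0, hσT⟩ : Set.Icc (0:ℝ) T)
    rw [Real.mul_iSup_of_nonneg ha, Real.mul_iSup_of_nonneg hb]
    rw [← le_sub_iff_add_le]
    apply ciSup_le
    intro τ₁
    rw [le_sub_iff_add_le, add_comm, ← le_sub_iff_add_le]
    apply ciSup_le
    intro τ₂
    rw [le_sub_iff_add_le, add_comm]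
    exact key τ₁ τ₁.2 τ₂ τ₂.2
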